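/- Let ω be an aperiodic infinite word over a finite alphabet such that for every n ≥ 1 and for a fixed positive integer k, P^{(k)}_ω(n) = q^{(k)}(n), where q^{(k)}(n) = n+1 for n ≤ 2k−1 and 2k for n ≥ 2k. Then ω is a Sturmian word (an aperiodic balanced binary word). -/

import Mathlib

set_option maxHeartbeats 1000000


/-- Number of occurrences of `x` as a factor of `w`. -/
def occ {A : Type*} [DecidableEq A] (w x : List A) : ℕ :=
  ((List.range (w.length + 1)).filter (fun i => decide (x <+: w.drop i))).length

/-- `k`-Abelian equivalence. -/
def KAbEq {A : Type*} [DecidableEq A] (k : ℕ) (u v : List A) : Prop :=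
  ∀ x : List A, x ≠ [] → x.length ≤ k → occ u x = occ v x

/-- `u` is a factor of the infinite word `ω`. -/
def IsFactorOf {A : Type*} (u : List A) (ω : ℕ → A) : Prop :=
  ∃ i : ℕ, u = (List.range u.length).map fun j => ω (i + j)

/-- `ω` is ultimately periodic. -/
def UltimatelyPeriodic {A : Type*} (ω : ℕ → A) : Prop :=
  ∃ p : ℕ, 1 ≤ p ∧ ∃ N : ℕ, ∀ i ≥ N, ω (i + p) = ω i

/-- The setoid of `k`-Abelian equivalence on the factors of `ω` of length `n`. -/
def factorSetoid {A : Type*} [DecidableEq A] (ω : ℕ → A) (k n : ℕ) :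
    Setoid {u : List A // u.length = n ∧ IsFactorOf u ω} where
  r u v := KAbEq k u.1 v.1
  iseqv := ⟨fun _ _ _ _ => rfl, fun h x hx hxk => (h x hx hxk).symm,
    fun h₁ h₂ x hx hxk => (h₁ x hx hxk).trans (h₂ x hx hxk)⟩

/-- The `k`-Abelian complexity of `ω`: the number of `k`-Abelian classes of
factors of `ω` of length `n`. -/
noncomputable def kabComplexity {A : Type*} [DecidableEq A] (ω : ℕ → A) (k n : ℕ) : ℕ :=
  Nat.card (Quotient (factorSetoid ω k n))


namespace KSZ
variable {A : Type*} [DecidableEq A]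

def win (ω : ℕ → A) (i n : ℕ) : List A := (List.range n).map fun j => ω (i + j)

lemma win_length (ω : ℕ → A) (i n : ℕ) : (win ω i n).length = n := by simp [win]

lemma win_ne_nil (ω : ℕ → A) (i n : ℕ) (hn : 1 ≤ n) : win ω i n ≠ [] := by
  intro h
  have := congrArg List.length h
  simp [win_length] at this
  omega

lemma win_getElem (ω : ℕ → A) (i n q : ℕ) (hq : q < n) :
    (win ω i n)[q]'(by simpa [win_length] using hq) = ω (i + q) := by
  simp [win]

lemma win_succ (ω : ℕ → A) (i n : ℕ) : win ω i (n+1) = win ω i n ++ [ω (i+n)] := by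
  simp [win, List.range_succ]

lemma win_one (ω : ℕ → A) (i : ℕ) : win ω i 1 = [ω i] := by
  simp [win, List.range_succ]

lemma win_cons (ω : ℕ → A) (i n : ℕ) : win ω i (n+1) = ω i :: win ω (i+1) n := by
  apply List.ext_getElem (by simp [win_length])
  intro q h1 h2
  cases q with
  | zero => simp [win]
  | succ q =>
    have hq : q < n := by simpa [win_length] using h2
    simp only [List.getElem_cons_succ]
    rw [win_getElem ω i (n+1) (q+1) (by omega), win_getElem ω (i+1) n q hq]
    congr 1
    omega

lemma win_drop (ω : ℕ → A) (i n p : ℕ) : (win ω i n).drop p = win ω (i+p) (n - p) := by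
  apply List.ext_getElem (by simp [win_length])
  intro q h1 h2
  rw [List.getElem_drop]
  have hq : q < n - p := by simpa [win_length] using h2
  rw [win_getElem ω i n (p+q) (by omega), win_getElem ω (i+p) (n-p) q hq]
  congr 1
  omega

lemma win_take (ω : ℕ → A) (i n p : ℕ) (hp : p ≤ n) : (win ω i n).take p = win ω i p := by
  apply List.ext_getElem (by simp [win_length]; omega)
  intro q h1 h2
  have hq : q < p := by simpa [win_length] using h2
  rw [List.getElem_take]
  rw [win_getElem ω i n q (by omega), win_getElem ω i p q hq]

lemma prefix_win_iff (ω : ℕ → A) (i n : ℕ) (z : List A) :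
    z <+: win ω i n ↔ z.length ≤ n ∧ win ω i z.length = z := by
  constructor
  · intro h
    have hl : z.length ≤ n := by
      have := h.length_le
      simpa [win_length] using this
    refine ⟨hl, ?_⟩
    have hz := List.prefix_iff_eq_take.mp h
    conv_rhs => rw [hz]
    rw [win_take ω i n _ hl]
  · rintro ⟨hl, he⟩
    rw [← he, ← win_take ω i n _ hl]
    exact List.take_prefix _ _

lemma list_filter_length_eq_card (n : ℕ) (p : ℕ → Prop) [DecidablePred p] :
    ((List.range n).filter (fun i => decide (p i))).length = ((Finset.range n).filter p).card := by
  induction n with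
  | zero => rfl
  | succ n ih =>
    rw [List.range_succ, List.filter_append, Finset.range_add_one, Finset.filter_insert]
    by_cases h : p n
    · rw [if_pos h, Finset.card_insert_of_notMem (by simp)]
      simp [h, ih]
    · rw [if_neg h]
      simp [h, ih]

lemma occ_eq_sum (ω : ℕ → A) (i m : ℕ) (z : List A) (hz : z.length ≤ m) :
    occ (win ω i m) z
      = ∑ p ∈ Finset.range (m - z.length + 1), if win ω (i+p) z.length = z then 1 else 0 := by
  unfold occ
  rw [win_length, list_filter_length_eq_card (m+1) (fun p => z <+: (win ω i m).drop p)]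
  rw [Finset.card_filter]
  rw [← Finset.sum_subset (Finset.range_subset_range.2 (by omega) :
      Finset.range (m - z.length + 1) ⊆ Finset.range (m+1))]
  · apply Finset.sum_congr rfl
    intro p hp
    have hp' : p ≤ m - z.length := by
      have := Finset.mem_range.1 hp; omega
    simp only [win_drop, prefix_win_iff]
    have : z.length ≤ m - p := by omega
    simp [this]
  · intro p hp hnp
    have hp1 : p < m + 1 := Finset.mem_range.1 hp
    have hp2 : ¬ p < m - z.length + 1 := fun h => hnp (Finset.mem_range.2 h)
    rw [if_neg]
    intro hpre
    rw [win_drop, prefix_win_iff] at hpre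
    omega

lemma occ_big (ω : ℕ → A) (i m : ℕ) (z : List A) (hz : m < z.length) :
    occ (win ω i m) z = 0 := by
  unfold occ
  rw [List.length_eq_zero_iff]
  rw [List.filter_eq_nil_iff]
  intro p hp
  simp only [decide_eq_true_eq]
  intro hpre
  have := hpre.length_le
  rw [win_drop, win_length] at this
  omega

lemma occ_self (ω : ℕ → A) (i m : ℕ) : occ (win ω i m) (win ω i m) = 1 := by
  rw [occ_eq_sum ω i m _ (by rw [win_length])]
  rw [win_length]
  have e : m - m + 1 = 1 := by omega
  rw [e, Finset.sum_range_one]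
  simp

lemma occ_split_left (ω : ℕ → A) (i m : ℕ) (z : List A) (hz : z.length ≤ m - 1) (hm : 1 ≤ m) :
    occ (win ω i m) z
      = (if win ω i z.length = z then 1 else 0) + occ (win ω (i+1) (m-1)) z := by
  rw [occ_eq_sum ω i m z (by omega), occ_eq_sum ω (i+1) (m-1) z hz]
  have hr : m - z.length + 1 = (m - 1 - z.length + 1) + 1 := by omega
  rw [hr, Finset.sum_range_succ']
  have h2 : ∑ p ∈ Finset.range (m - 1 - z.length + 1), (if win ω (i + (p+1)) z.length = z then 1 else 0)
      = ∑ p ∈ Finset.range (m - 1 - z.length + 1), (if win ω (i + 1 + p) z.length = z then 1 else 0) := by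
    apply Finset.sum_congr rfl
    intro p _
    have e : i + (p + 1) = i + 1 + p := by omega
    rw [e]
  rw [h2]
  simp only [Nat.add_zero]
  exact Nat.add_comm _ _

lemma occ_split_right (ω : ℕ → A) (i m : ℕ) (z : List A) (hz : z.length ≤ m - 1) (hm : 1 ≤ m) :
    occ (win ω i m) z
      = occ (win ω i (m-1)) z + (if win ω (i + (m - z.length)) z.length = z then 1 else 0) := by
  rw [occ_eq_sum ω i m z (by omega), occ_eq_sum ω i (m-1) z hz]
  have hr : m - z.length + 1 = (m - 1 - z.length + 1) + 1 := by omega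
  rw [hr, Finset.sum_range_succ]
  have e : m - 1 - z.length + 1 = m - z.length := by omega
  rw [e]


lemma append_singleton_inj {l1 l2 : List A} {a b : A} :
    l1 ++ [a] = l2 ++ [b] ↔ (l1 = l2 ∧ a = b) := by
  constructor
  · intro h
    have hl : l1.length = l2.length := by
      have := congrArg List.length h
      simpa using this
    obtain ⟨h1, h2⟩ := List.append_inj h hl
    exact ⟨h1, by simpa using h2⟩
  · rintro ⟨rfl, rfl⟩; rfl

variable [Fintype A]

lemma sum_ite_cons (x : A) (w z : List A) :
    (∑ c : A, if (x :: w : List A) = c :: z then 1 else 0) = if w = z then 1 else 0 := by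
  by_cases hq : w = z
  · subst hq
    rw [if_pos rfl, Finset.sum_eq_single x]
    · simp
    · intro c _ hc
      rw [if_neg]
      simp only [List.cons_eq_cons, not_and]
      intro hxc _
      exact hc hxc.symm
    · intro hx; exact absurd (Finset.mem_univ x) hx
  · rw [if_neg hq, Finset.sum_eq_zero]
    intro c _
    rw [if_neg]
    simp only [List.cons_eq_cons, not_and]
    intro _ hw
    exact hq hw

lemma sum_ite_concat (x : A) (w z : List A) :
    (∑ c : A, if w ++ [x] = z ++ [c] then 1 else 0) = if w = z then 1 else 0 := by
  by_cases hq : w = z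
  · subst hq
    rw [if_pos rfl, Finset.sum_eq_single x]
    · simp
    · intro c _ hc
      rw [if_neg]
      rw [append_singleton_inj]
      simp only [not_and]
      intro _ hxc
      exact hc hxc.symm
    · intro hx; exact absurd (Finset.mem_univ x) hx
  · rw [if_neg hq, Finset.sum_eq_zero]
    intro c _
    rw [if_neg]
    rw [append_singleton_inj]
    simp only [not_and]
    intro hw _
    exact hq hw

lemma sum_occ_cons (ω : ℕ → A) (i m : ℕ) (z : List A) (hz : z.length + 1 ≤ m) :
    ∑ c : A, occ (win ω i m) (c :: z) = occ (win ω (i+1) (m-1)) z := by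
  have h1 : ∀ c : A, occ (win ω i m) (c :: z)
      = ∑ p ∈ Finset.range (m - 1 - z.length + 1),
          if win ω (i+p) (z.length + 1) = c :: z then 1 else 0 := by
    intro c
    rw [occ_eq_sum ω i m (c :: z) (by simpa using hz)]
    have e1 : m - (c :: z).length + 1 = m - 1 - z.length + 1 := by
      simp only [List.length_cons]; omega
    rw [e1]
    apply Finset.sum_congr rfl
    intro p _
    simp only [List.length_cons]
  simp only [h1]
  rw [Finset.sum_comm]
  have h2 : ∀ p ∈ Finset.range (m - 1 - z.length + 1),
      (∑ c : A, if win ω (i+p) (z.length + 1) = c :: z then 1 else 0)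
        = if win ω (i + 1 + p) z.length = z then 1 else 0 := by
    intro p _
    have hsplit : win ω (i+p) (z.length + 1) = ω (i+p) :: win ω (i+p+1) z.length :=
      win_cons ω (i+p) z.length
    have e2 : i + p + 1 = i + 1 + p := by omega
    rw [hsplit, e2]
    exact sum_ite_cons (ω (i+p)) (win ω (i+1+p) z.length) z
  rw [Finset.sum_congr rfl h2, occ_eq_sum ω (i+1) (m-1) z (by omega)]

lemma sum_occ_concat (ω : ℕ → A) (i m : ℕ) (z : List A) (hz : z.length + 1 ≤ m) :
    ∑ c : A, occ (win ω i m) (z ++ [c]) = occ (win ω i (m-1)) z := by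
  have h1 : ∀ c : A, occ (win ω i m) (z ++ [c])
      = ∑ p ∈ Finset.range (m - 1 - z.length + 1),
          if win ω (i+p) (z.length + 1) = z ++ [c] then 1 else 0 := by
    intro c
    rw [occ_eq_sum ω i m (z ++ [c]) (by simpa using hz)]
    have e1 : m - (z ++ [c]).length + 1 = m - 1 - z.length + 1 := by
      simp only [List.length_append, List.length_singleton]; omega
    rw [e1]
    apply Finset.sum_congr rfl
    intro p _
    simp only [List.length_append, List.length_singleton]
  simp only [h1]
  rw [Finset.sum_comm]
  have h2 : ∀ p ∈ Finset.range (m - 1 - z.length + 1),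
      (∑ c : A, if win ω (i+p) (z.length + 1) = z ++ [c] then 1 else 0)
        = if win ω (i + p) z.length = z then 1 else 0 := by
    intro p _
    have hsplit : win ω (i+p) (z.length + 1) = win ω (i+p) z.length ++ [ω (i+p+z.length)] :=
      win_succ ω (i+p) z.length
    rw [hsplit]
    exact sum_ite_concat (ω (i+p+z.length)) (win ω (i+p) z.length) z
  rw [Finset.sum_congr rfl h2, occ_eq_sum ω i (m-1) z (by omega)]

def Phi (j : ℕ) (u : List A) : List A → ℕ :=
  fun x => if x ≠ [] ∧ x.length ≤ j then occ u x else 0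

lemma phi_occ {j : ℕ} {u v : List A} (h : Phi j u = Phi j v) {z : List A}
    (h0 : z ≠ []) (h1 : z.length ≤ j) : occ u z = occ v z := by
  have := congrFun h z
  simpa [Phi, h0, h1] using this

lemma singleton_ne_nil (c : A) : ([c] : List A) ≠ [] := by simp

lemma transfer (ω : ℕ → A) (j n' : ℕ) (i i' : ℕ) (hj : 1 ≤ j) (hz : j ≤ n' + 1)
    (h : Phi (j+1) (win ω i (n'+2)) = Phi (j+1) (win ω i' (n'+2))) :
    ω i = ω i' ∧ ω (i + (n'+1)) = ω (i' + (n'+1)) ∧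
      Phi j (win ω (i+1) n') = Phi j (win ω (i'+1) n') := by
  set m := n' + 2 with hm
  have hm1 : 1 ≤ m := by omega
  -- prefix indicators agree
  have hpre : ∀ z : List A, z ≠ [] → z.length ≤ j →
      (if win ω i z.length = z then 1 else 0) = (if win ω i' z.length = z then 1 else 0) := by
    intro z h0 h1
    have hlz : z.length ≤ m - 1 := by omega
    have E1 := occ_split_left ω i m z hlz hm1
    have E1' := occ_split_left ω i' m z hlz hm1
    have S1 := sum_occ_cons ω i m z (by omega)
    have S1' := sum_occ_cons ω i' m z (by omega)
    have hO : occ (win ω i m) z = occ (win ω i' m) z := phi_occ h h0 (by omega)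
    have hS : ∑ c : A, occ (win ω i m) (c :: z) = ∑ c : A, occ (win ω i' m) (c :: z) :=
      Finset.sum_congr rfl (fun c _ => phi_occ h (by simp) (by simp; omega))
    rw [← S1] at E1
    rw [← S1'] at E1'
    omega
  -- suffix indicators agree
  have hsuf : ∀ z : List A, z ≠ [] → z.length ≤ j →
      (if win ω (i + (m - z.length)) z.length = z then 1 else 0)
        = (if win ω (i' + (m - z.length)) z.length = z then 1 else 0) := by
    intro z h0 h1
    have hlz : z.length ≤ m - 1 := by omega
    have E1 := occ_split_right ω i m z hlz hm1
    have E1' := occ_split_right ω i' m z hlz hm1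
    have S1 := sum_occ_concat ω i m z (by omega)
    have S1' := sum_occ_concat ω i' m z (by omega)
    have hO : occ (win ω i m) z = occ (win ω i' m) z := phi_occ h h0 (by omega)
    have hS : ∑ c : A, occ (win ω i m) (z ++ [c]) = ∑ c : A, occ (win ω i' m) (z ++ [c]) :=
      Finset.sum_congr rfl (fun c _ => phi_occ h (by simp) (by simp; omega))
    rw [← S1] at E1
    rw [← S1'] at E1'
    omega
  refine ⟨?_, ?_, ?_⟩
  · -- first letters
    have := hpre [ω i] (singleton_ne_nil _) (by simpa using hj)
    rw [List.length_singleton] at this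
    rw [win_one, win_one, if_pos rfl] at this
    by_contra hne
    have hcond : ¬ (([ω i'] : List A) = [ω i]) := by
      intro hh
      injection hh with h1
      exact hne h1.symm
    rw [if_neg hcond] at this
    omega
  · -- last letters
    have := hsuf [ω (i + (m-1))] (singleton_ne_nil _) (by simpa using hj)
    rw [List.length_singleton] at this
    rw [win_one, win_one, if_pos rfl] at this
    have e1 : i + (m-1) = i + (n'+1) := by omega
    have e2 : i' + (m-1) = i' + (n'+1) := by omega
    rw [e1, e2] at this
    by_contra hne
    have hcond : ¬ (([ω (i' + (n'+1))] : List A) = [ω (i + (n'+1))]) := by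
      intro hh
      injection hh with h1
      exact hne h1.symm
    rw [if_neg hcond] at this
    omega
  · -- interior classes
    funext z
    by_cases hc : z ≠ [] ∧ z.length ≤ j
    · obtain ⟨h0, h1⟩ := hc
      rw [Phi, Phi]
      rw [if_pos ⟨h0, h1⟩, if_pos ⟨h0, h1⟩]
      by_cases hlen : z.length ≤ n'
      · have hlz : z.length ≤ m - 1 := by omega
        have E1 := occ_split_left ω i m z hlz hm1
        have E1' := occ_split_left ω i' m z hlz hm1
        have E2 := occ_split_right ω (i+1) (m-1) z (by omega) (by omega)
        have E2' := occ_split_right ω (i'+1) (m-1) z (by omega) (by omega)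
        have e3 : i + 1 + (m - 1 - z.length) = i + (m - z.length) := by omega
        have e3' : i' + 1 + (m - 1 - z.length) = i' + (m - z.length) := by omega
        rw [e3] at E2
        rw [e3'] at E2'
        have e4 : m - 1 - 1 = n' := by omega
        rw [e4] at E2 E2'
        have hO : occ (win ω i m) z = occ (win ω i' m) z := phi_occ h h0 (by omega)
        have hP := hpre z h0 h1
        have hS := hsuf z h0 h1
        omega
      · have hb : n' < z.length := by omega
        rw [occ_big ω (i+1) n' z hb, occ_big ω (i'+1) n' z hb]
    · rw [Phi, Phi]
      rw [if_neg hc, if_neg hc]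

def Wset (ω : ℕ → A) (m t : ℕ) : Set (List A) := (fun i => win ω i m) '' Set.Ici t

def Cls (ω : ℕ → A) (j m t : ℕ) : Set (List A → ℕ) :=
  (fun i => Phi j (win ω i m)) '' Set.Ici t

lemma Wset_finite (ω : ℕ → A) (m t : ℕ) : (Wset ω m t).Finite := by
  apply (List.finite_length_eq A m).subset
  rintro _ ⟨i, _, rfl⟩
  simp [win_length]

lemma Cls_eq_image (ω : ℕ → A) (j m t : ℕ) : Cls ω j m t = Phi j '' Wset ω m t := by
  rw [Wset, Cls, Set.image_image]

lemma Cls_finite (ω : ℕ → A) (j m t : ℕ) : (Cls ω j m t).Finite := by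
  rw [Cls_eq_image]
  exact (Wset_finite ω m t).image _

lemma Wset_subset (ω : ℕ → A) (m : ℕ) {t t' : ℕ} (h : t ≤ t') : Wset ω m t' ⊆ Wset ω m t :=
  Set.image_mono (Set.Ici_subset_Ici.2 h)

lemma Cls_subset (ω : ℕ → A) (j m : ℕ) {t t' : ℕ} (h : t ≤ t') : Cls ω j m t' ⊆ Cls ω j m t :=
  Set.image_mono (Set.Ici_subset_Ici.2 h)

lemma ncard_image_le_image {β γ : Type*} (f : ℕ → β) (g : ℕ → γ) (I : Set ℕ)
    (hI : I.Nonempty) (h : ∀ i ∈ I, ∀ i' ∈ I, f i = f i' → g i = g i')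
    (hfin : (f '' I).Finite) :
    (g '' I).ncard ≤ (f '' I).ncard := by
  classical
  obtain ⟨i0, hi0⟩ := hI
  set G : β → γ := fun y => if hy : ∃ i ∈ I, f i = y then g hy.choose else g i0 with hG
  have hfac : ∀ i ∈ I, G (f i) = g i := by
    intro i hi
    have hy : ∃ i' ∈ I, f i' = f i := ⟨i, hi, rfl⟩
    rw [hG]
    simp only
    rw [dif_pos hy]
    exact h _ hy.choose_spec.1 _ hi hy.choose_spec.2
  have himg : g '' I = G '' (f '' I) := by
    ext c
    constructor
    · rintro ⟨i, hi, rfl⟩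
      exact ⟨f i, ⟨i, hi, rfl⟩, hfac i hi⟩
    · rintro ⟨y, ⟨i, hi, rfl⟩, rfl⟩
      exact ⟨i, hi, (hfac i hi).symm⟩
  rw [himg]
  exact Set.ncard_image_le hfin

lemma image_shift {β : Type*} (F : ℕ → β) (t : ℕ) :
    (fun i => F (i+1)) '' Set.Ici t = F '' Set.Ici (t+1) := by
  ext y
  constructor
  · rintro ⟨i, hi, rfl⟩
    exact ⟨i+1, by simp only [Set.mem_Ici] at hi ⊢; omega, rfl⟩
  · rintro ⟨i, hi, rfl⟩
    simp only [Set.mem_Ici] at hi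
    refine ⟨i-1, by simp only [Set.mem_Ici]; omega, ?_⟩
    show F (i - 1 + 1) = F i
    congr 1
    omega

lemma ncard_add_two_V1 {γ δ : Type*} {S : Set γ} (hS : S.Finite) (g : γ → δ)
    {s1 s2 s3 : γ} (h1 : s1 ∈ S) (h2 : s2 ∈ S) (h3 : s3 ∈ S)
    (h12 : s1 ≠ s2) (h13 : s1 ≠ s3) (h23 : s2 ≠ s3)
    (e12 : g s1 = g s2) (e13 : g s1 = g s3) :
    (g '' S).ncard + 2 ≤ S.ncard := by
  have hsub : ({s2, s3} : Set γ) ⊆ S := by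
    intro x hx
    rcases hx with rfl | rfl
    · exact h2
    · exact h3
  have himg : g '' S = g '' (S \ {s2, s3}) := by
    apply subset_antisymm
    · rintro _ ⟨x, hx, rfl⟩
      by_cases hx2 : x = s2
      · exact ⟨s1, ⟨h1, by simp [h12, h13]⟩, by rw [hx2, ← e12]⟩
      · by_cases hx3 : x = s3
        · exact ⟨s1, ⟨h1, by simp [h12, h13]⟩, by rw [hx3, ← e13]⟩
        · exact ⟨x, ⟨hx, by simp [hx2, hx3]⟩, rfl⟩
    · exact Set.image_mono Set.diff_subset
  have hd : (S \ {s2, s3}).ncard = S.ncard - 2 := by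
    rw [Set.ncard_diff hsub (Set.toFinite _), Set.ncard_pair h23]
  have h2S : 2 ≤ S.ncard := by
    have := Set.ncard_le_ncard hsub hS
    rw [Set.ncard_pair h23] at this
    exact this
  have := Set.ncard_image_le (s := S \ {s2, s3}) (f := g) (hS.subset Set.diff_subset)
  rw [← himg, hd] at this
  omega

lemma ncard_add_two_V2 {γ δ : Type*} {S : Set γ} (hS : S.Finite) (g : γ → δ)
    {s1 s2 s3 s4 : γ} (h1 : s1 ∈ S) (h2 : s2 ∈ S) (h3 : s3 ∈ S) (h4 : s4 ∈ S)
    (h12 : s1 ≠ s2) (h34 : s3 ≠ s4)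
    (e12 : g s1 = g s2) (e34 : g s3 = g s4) (ne13 : g s1 ≠ g s3) :
    (g '' S).ncard + 2 ≤ S.ncard := by
  have h24 : s2 ≠ s4 := by
    intro hh
    apply ne13
    rw [e12, e34, hh]
  have hsub : ({s2, s4} : Set γ) ⊆ S := by
    intro x hx
    rcases hx with rfl | rfl
    · exact h2
    · exact h4
  have h14 : s1 ≠ s4 := by
    intro hh
    apply ne13
    rw [e34, ← hh]
  have h32 : s3 ≠ s2 := by
    intro hh
    apply ne13
    rw [e12, ← hh]
  have himg : g '' S = g '' (S \ {s2, s4}) := by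
    apply subset_antisymm
    · rintro _ ⟨x, hx, rfl⟩
      by_cases hx2 : x = s2
      · exact ⟨s1, ⟨h1, by simp [h12, h14]⟩, by rw [hx2, ← e12]⟩
      · by_cases hx4 : x = s4
        · exact ⟨s3, ⟨h3, by simp [h32, h34]⟩, by rw [hx4, ← e34]⟩
        · exact ⟨x, ⟨hx, by simp [hx2, hx4]⟩, rfl⟩
    · exact Set.image_mono Set.diff_subset
  have hd : (S \ {s2, s4}).ncard = S.ncard - 2 := by
    rw [Set.ncard_diff hsub (Set.toFinite _), Set.ncard_pair h24]
  have h2S : 2 ≤ S.ncard := by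
    have := Set.ncard_le_ncard hsub hS
    rw [Set.ncard_pair h24] at this
    exact this
  have := Set.ncard_image_le (s := S \ {s2, s4}) (f := g) (hS.subset Set.diff_subset)
  rw [← himg, hd] at this
  omega

lemma win_shift (ω : ℕ → A) (i N : ℕ) (hN : 1 ≤ N) :
    win ω (i+1) N = (win ω i N).drop 1 ++ [ω (i + N)] := by
  rw [win_drop]
  have e1 : N - 1 + 1 = N := by omega
  have e2 : i + 1 + (N - 1) = i + N := by omega
  rw [← e2, ← win_succ ω (i+1) (N-1), e1]

lemma det_periodic (ω : ℕ → A) (N t : ℕ) (F : List A → A)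
    (hdet : ∀ i, t ≤ i → ω (i + N) = F (win ω i N)) : UltimatelyPeriodic ω := by
  have hinf : (Set.Ici t).Infinite := Set.Ici_infinite t
  obtain ⟨i1, hi1, i2, hi2, hne, heq⟩ :=
    hinf.exists_ne_map_eq_of_mapsTo (Set.mapsTo_image (fun i => win ω i N) (Set.Ici t))
      (Wset_finite ω N t)
  simp only [Set.mem_Ici] at hi1 hi2
  have key : ∀ j1 j2 : ℕ, t ≤ j1 → t ≤ j2 → j1 < j2 → win ω j1 N = win ω j2 N →
      UltimatelyPeriodic ω := by
    intro j1 j2 ht1 ht2 hlt hww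
    have blocks : ∀ s : ℕ, win ω (j1+s) N = win ω (j2+s) N := by
      intro s
      induction s with
      | zero => simpa using hww
      | succ s ih =>
        rcases Nat.eq_zero_or_pos N with hN0 | hN1
        · subst hN0
          simp [win]
        · have e1 := win_shift ω (j1+s) N hN1
          have e2 := win_shift ω (j2+s) N hN1
          have hl1 : ω (j1 + s + N) = ω (j2 + s + N) := by
            rw [hdet (j1+s) (by omega), hdet (j2+s) (by omega), ih]
          have e3 : j1 + (s+1) = j1 + s + 1 := by omega
          have e4 : j2 + (s+1) = j2 + s + 1 := by omega
          rw [e3, e4, e1, e2, ih, hl1]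
    have hlet : ∀ s : ℕ, ω (j1 + s + N) = ω (j2 + s + N) := by
      intro s
      rw [hdet (j1+s) (by omega), hdet (j2+s) (by omega), blocks s]
    refine ⟨j2 - j1, by omega, j1 + N, ?_⟩
    intro i hi
    have hs : i = j1 + (i - j1 - N) + N := by omega
    have := hlet (i - j1 - N)
    rw [← hs] at this
    have e5 : j2 + (i - j1 - N) + N = i + (j2 - j1) := by omega
    rw [e5] at this
    exact this.symm
  rcases hne.lt_or_gt with hlt | hlt
  · exact key i1 i2 hi1 hi2 hlt heq
  · exact key i2 i1 hi2 hi1 hlt heq.symm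

lemma wset_take (ω : ℕ → A) (N t : ℕ) :
    Wset ω N t = (fun l => l.take N) '' Wset ω (N+1) t := by
  rw [Wset, Wset, Set.image_image]
  apply Set.image_congr'
  intro i
  rw [win_take ω i (N+1) N (by omega)]

lemma MH (ω : ℕ → A) (N t : ℕ)
    (hc : (Wset ω (N+1) t).ncard ≤ (Wset ω N t).ncard) : UltimatelyPeriodic ω := by
  classical
  have hmono : (Wset ω N t).ncard ≤ (Wset ω (N+1) t).ncard := by
    rw [wset_take ω N t]
    exact Set.ncard_image_le (Wset_finite ω (N+1) t)
  have heq : (Wset ω (N+1) t).ncard = (Wset ω N t).ncard := le_antisymm hc hmono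
  have hrs : ∀ i i', t ≤ i → t ≤ i' → win ω i N = win ω i' N → ω (i+N) = ω (i'+N) := by
    by_contra hcon
    push_neg at hcon
    obtain ⟨i, i', hi, hi', hww, hne⟩ := hcon
    set v1 := win ω i (N+1) with hv1
    set v2 := win ω i' (N+1) with hv2
    have hv12 : v1 ≠ v2 := by
      intro hh
      rw [hv1, hv2, win_succ, win_succ] at hh
      obtain ⟨_, h2⟩ := append_singleton_inj.1 hh
      exact hne h2
    have hv2mem : v2 ∈ Wset ω (N+1) t := ⟨i', hi', rfl⟩
    have hcover : Wset ω N t = (fun l => l.take N) '' (Wset ω (N+1) t \ {v2}) := by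
      apply subset_antisymm
      · rintro _ ⟨i0, hi0, rfl⟩
        by_cases h0 : win ω i0 (N+1) = v2
        · refine ⟨v1, ⟨⟨i, hi, rfl⟩, by simp [hv12]⟩, ?_⟩
          have t1 : (win ω i0 (N+1)).take N = win ω i0 N := win_take ω i0 (N+1) N (by omega)
          have t2 : v2.take N = win ω i' N := by rw [hv2]; exact win_take ω i' (N+1) N (by omega)
          have t3 : v1.take N = win ω i N := by rw [hv1]; exact win_take ω i (N+1) N (by omega)
          show v1.take N = win ω i0 N
          rw [t3, hww, ← t2, ← h0, t1]
        · refine ⟨win ω i0 (N+1), ⟨⟨i0, hi0, rfl⟩, by simp [h0]⟩, win_take ω i0 (N+1) N (by omega)⟩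
      · rintro _ ⟨l, ⟨⟨i0, hi0, rfl⟩, _⟩, rfl⟩
        exact ⟨i0, hi0, (win_take ω i0 (N+1) N (by omega)).symm⟩
    have hfin1 := Wset_finite ω (N+1) t
    have hle : (Wset ω N t).ncard ≤ (Wset ω (N+1) t).ncard - 1 := by
      rw [hcover]
      have := Set.ncard_image_le (s := Wset ω (N+1) t \ {v2}) (f := fun l => List.take N l) hfin1.diff
      have hd : (Wset ω (N+1) t \ {v2}).ncard = (Wset ω (N+1) t).ncard - 1 := by
        rw [Set.ncard_diff (by simpa using hv2mem) (Set.toFinite _)]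
        simp
      omega
    have hpos : 0 < (Wset ω (N+1) t).ncard := (Set.ncard_pos hfin1).2 ⟨v2, hv2mem⟩
    omega
  set F : List A → A := fun B => if hB : ∃ i0, t ≤ i0 ∧ win ω i0 N = B then ω (hB.choose + N) else ω 0
    with hF
  apply det_periodic ω N t F
  intro i hi
  have hB : ∃ i0, t ≤ i0 ∧ win ω i0 N = win ω i N := ⟨i, hi, rfl⟩
  rw [hF]
  simp only
  rw [dif_pos hB]
  exact (hrs hB.choose i hB.choose_spec.1 hi hB.choose_spec.2).symm

lemma noLS_periodic (ω : ℕ → A) (N t : ℕ)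
    (h : ∀ i i', t ≤ i → t ≤ i' → win ω (i+1) N = win ω (i'+1) N → ω i = ω i') :
    UltimatelyPeriodic ω := by
  have hinj : Set.InjOn (fun l => l.drop 1) (Wset ω (N+1) (t+1)) := by
    rintro _ ⟨i, hi, rfl⟩ _ ⟨i', hi', rfl⟩ hdrop
    simp only [Set.mem_Ici] at hi hi'
    simp only at hdrop
    rw [win_drop, win_drop] at hdrop
    simp only [Nat.add_sub_cancel] at hdrop
    have hω : ω i = ω i' := h i i' (by omega) (by omega) hdrop
    show win ω i (N+1) = win ω i' (N+1)
    rw [win_cons, win_cons, hω, hdrop]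
  have himg : (fun l => l.drop 1) '' Wset ω (N+1) (t+1) = Wset ω N (t+2) := by
    rw [Wset, Set.image_image]
    have : ∀ i : ℕ, (win ω i (N+1)).drop 1 = win ω (i+1) N := by
      intro i
      rw [win_drop]
      simp
    rw [Set.image_congr' this]
    have := image_shift (fun i => win ω i N) (t+1)
    rw [this]
    rfl
  have hcard : (Wset ω (N+1) (t+1)).ncard = (Wset ω N (t+2)).ncard := by
    rw [← himg, Set.ncard_image_of_injOn hinj]
  have hsub : (Wset ω N (t+2)).ncard ≤ (Wset ω N (t+1)).ncard :=
    Set.ncard_le_ncard (Wset_subset ω N (by omega)) (Wset_finite ω N (t+1))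
  exact MH ω N (t+1) (by omega)

lemma MH_growth (ω : ℕ → A) (hap : ¬ UltimatelyPeriodic ω) (t : ℕ) :
    ∀ L : ℕ, L + 1 ≤ (Wset ω L t).ncard := by
  intro L
  induction L with
  | zero =>
    have : Wset ω 0 t = {([] : List A)} := by
      apply subset_antisymm
      · rintro _ ⟨i, _, rfl⟩
        simp [win]
      · rintro _ rfl
        exact ⟨t, le_refl t, by simp [win]⟩
    rw [this]
    simp
  | succ L ih =>
    by_cases hc : (Wset ω (L+1) t).ncard ≤ (Wset ω L t).ncard
    · exact absurd (MH ω L t hc) hap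
    · omega

lemma step (ω : ℕ → A) (hap : ¬ UltimatelyPeriodic ω) (j n' t : ℕ)
    (hj : 1 ≤ j) (hz : j ≤ n'+1) :
    (Cls ω j n' (t+1)).ncard + 2 ≤ (Cls ω (j+1) (n'+2) t).ncard := by
  classical
  set T : ℕ → (List A → ℕ) × A × A :=
    fun i => (Phi j (win ω (i+1) n'), ω i, ω (i + (n'+1))) with hT
  set Trip : Set ((List A → ℕ) × A × A) := T '' Set.Ici t with hTrip
  have hTmem : ∀ i, t ≤ i → T i ∈ Trip := fun i hi => ⟨i, hi, rfl⟩
  have hTfin : Trip.Finite := by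
    apply Set.Finite.subset
      (((List.finite_length_eq A n').image (Phi j)).prod
        ((Set.finite_univ (α := A)).prod (Set.finite_univ (α := A))))
    rintro _ ⟨i, _, rfl⟩
    refine ⟨⟨win ω (i+1) n', by simp [win_length], rfl⟩, ⟨trivial, trivial⟩⟩
  have hClsDef : Cls ω (j+1) (n'+2) t = (fun i => Phi (j+1) (win ω i (n'+2))) '' Set.Ici t := rfl
  have hT1 : Trip.ncard ≤ (Cls ω (j+1) (n'+2) t).ncard := by
    rw [hClsDef, hTrip]
    apply ncard_image_le_image (fun i => Phi (j+1) (win ω i (n'+2))) T (Set.Ici t)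
      ⟨t, le_refl t⟩
    · intro i hi i' hi' hf
      obtain ⟨e1, e2, e3⟩ := transfer ω j n' i i' hj hz hf
      rw [hT]
      simp only [Prod.mk.injEq]
      exact ⟨e3, e1, e2⟩
    · rw [← hClsDef]
      exact Cls_finite ω (j+1) (n'+2) t
  have hproj : Prod.fst '' Trip = Cls ω j n' (t+1) := by
    rw [hTrip, Set.image_image, hT]
    have := image_shift (fun i => Phi j (win ω i n')) t
    simp only at this ⊢
    rw [this]
    rfl
  have hT2 : (Cls ω j n' (t+1)).ncard ≤ Trip.ncard := by
    rw [← hproj]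
    exact Set.ncard_image_le hTfin
  by_cases case1 : ∀ i, t ≤ i → ∀ i', t ≤ i' →
      Phi j (win ω (i+1) n') = Phi j (win ω (i'+1) n') → ω i = ω i' →
      ω (i + (n'+1)) = ω (i' + (n'+1))
  · exfalso
    apply hap
    set F : List A → A :=
      fun B => if hB : ∃ i0, t ≤ i0 ∧ win ω i0 (n'+1) = B then ω (hB.choose + (n'+1)) else ω 0
      with hF
    apply det_periodic ω (n'+1) t F
    intro i hi
    have hB : ∃ i0, t ≤ i0 ∧ win ω i0 (n'+1) = win ω i (n'+1) := ⟨i, hi, rfl⟩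
    rw [hF]
    simp only
    rw [dif_pos hB]
    obtain ⟨hle, hweq⟩ := hB.choose_spec
    set i0 := hB.choose
    have hcons : ω i0 :: win ω (i0+1) n' = ω i :: win ω (i+1) n' := by
      rw [← win_cons, ← win_cons]
      exact hweq
    have hhead : ω i0 = ω i := by injection hcons
    have htail : win ω (i0+1) n' = win ω (i+1) n' := by injection hcons
    exact (case1 i0 hle i hi (congrArg (Phi j) htail) hhead).symm
  · push_neg at case1
    obtain ⟨i1, hi1, i2, hi2, hD, hx, hy⟩ := case1
    by_cases case2 : ∀ i, t ≤ i → ∀ i', t ≤ i' →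
        win ω (i+1) n' = win ω (i'+1) n' → ω i = ω i'
    · exact absurd (noLS_periodic ω n' t (fun i i' hi hi' => case2 i hi i' hi')) hap
    · push_neg at case2
      obtain ⟨i3, hi3, i4, hi4, hw34, hx34⟩ := case2
      have hne12 : T i1 ≠ T i2 := by
        intro hh
        rw [hT] at hh
        simp only [Prod.mk.injEq] at hh
        exact hy hh.2.2
      have hne34 : T i3 ≠ T i4 := by
        intro hh
        rw [hT] at hh
        simp only [Prod.mk.injEq] at hh
        exact hx34 hh.2.1
      have hg12 : (T i1).1 = (T i2).1 := hD
      have hg34 : (T i3).1 = (T i4).1 := congrArg (Phi j) hw34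
      have main : (Prod.fst '' Trip).ncard + 2 ≤ Trip.ncard := by
        by_cases hcc : (T i1).1 = (T i3).1
        · -- all four have the same first component; find a third element
          by_cases h31 : ω i3 = ω i1
          · -- use T i4
            have hne14 : T i1 ≠ T i4 := by
              intro hh
              rw [hT] at hh
              simp only [Prod.mk.injEq] at hh
              exact hx34 (h31.trans hh.2.1)
            have hne24 : T i2 ≠ T i4 := by
              intro hh
              rw [hT] at hh
              simp only [Prod.mk.injEq] at hh
              exact hx34 (h31.trans (hx.trans hh.2.1))
            exact ncard_add_two_V1 hTfin Prod.fst (hTmem i1 hi1) (hTmem i2 hi2) (hTmem i4 hi4)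
              hne12 hne14 hne24 hg12 (hcc.trans hg34)
          · -- use T i3
            have hne13 : T i1 ≠ T i3 := by
              intro hh
              rw [hT] at hh
              simp only [Prod.mk.injEq] at hh
              exact h31 hh.2.1.symm
            have hne23 : T i2 ≠ T i3 := by
              intro hh
              rw [hT] at hh
              simp only [Prod.mk.injEq] at hh
              exact h31 (hh.2.1.symm.trans hx.symm)
            exact ncard_add_two_V1 hTfin Prod.fst (hTmem i1 hi1) (hTmem i2 hi2) (hTmem i3 hi3)
              hne12 hne13 hne23 hg12 hcc
        · exact ncard_add_two_V2 hTfin Prod.fst (hTmem i1 hi1) (hTmem i2 hi2) (hTmem i3 hi3)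
            (hTmem i4 hi4) hne12 hne34 hg12 hg34 hcc
      rw [hproj] at main
      omega

lemma chain (ω : ℕ → A) (hap : ¬ UltimatelyPeriodic ω) :
    ∀ j m t : ℕ, 1 ≤ j → 2*j - 1 ≤ m →
      (Cls ω 1 (m - 2*(j-1)) (t + (j-1))).ncard + 2*(j-1) ≤ (Cls ω j m t).ncard := by
  intro j
  induction j with
  | zero => intro m t hj _; omega
  | succ j ih =>
    intro m t _ hm
    by_cases hj0 : j = 0
    · subst hj0
      simp
    · have hj1 : 1 ≤ j := by omega
      have hstep := step ω hap j (m-2) t hj1 (by omega)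
      have e3 : m - 2 + 2 = m := by omega
      rw [e3] at hstep
      have ihm := ih (m-2) (t+1) hj1 (by omega)
      have e1 : m - 2 - 2*(j-1) = m - 2*(j+1-1) := by omega
      have e2 : t + 1 + (j-1) = t + (j+1-1) := by omega
      rw [e1, e2] at ihm
      omega

def cval (ω : ℕ → A) (a : A) (i L : ℕ) : ℕ :=
  ∑ p ∈ Finset.range L, if ω (i+p) = a then 1 else 0

lemma count_win (ω : ℕ → A) (a : A) (i L : ℕ) : (win ω i L).count a = cval ω a i L := by
  induction L with
  | zero => rfl
  | succ L ih =>
    rw [win_succ, List.count_append, cval, Finset.sum_range_succ, ← cval, ih]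
    by_cases h : ω (i+L) = a
    · simp [h]
    · simp [List.count_cons, h]

lemma cval_occ (ω : ℕ → A) (a : A) (i L : ℕ) (hL : 1 ≤ L) :
    occ (win ω i L) [a] = cval ω a i L := by
  rw [occ_eq_sum ω i L [a] (by simpa using hL)]
  simp only [List.length_singleton]
  have e : L - 1 + 1 = L := by omega
  rw [e, cval]
  apply Finset.sum_congr rfl
  intro p _
  by_cases h : ω (i+p) = a
  · rw [if_pos (by rw [win_one, h]), if_pos h]
  · have hc : ¬ (win ω (i+p) 1 = [a]) := by
      rw [win_one]
      intro hh
      injection hh with h1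
      exact h h1
    rw [if_neg hc, if_neg h]

lemma cval_step (ω : ℕ → A) (a : A) (i L : ℕ) :
    cval ω a (i+1) L + (if ω i = a then 1 else 0)
      = cval ω a i L + (if ω (i+L) = a then 1 else 0) := by
  have h1 : cval ω a i (L+1) = cval ω a i L + (if ω (i+L) = a then 1 else 0) := by
    rw [cval, Finset.sum_range_succ, ← cval]
  have h2 : cval ω a i (L+1) = cval ω a (i+1) L + (if ω i = a then 1 else 0) := by
    rw [cval, Finset.sum_range_succ']
    congr 1
    apply Finset.sum_congr rfl
    intro p _
    have e : i + (p+1) = i + 1 + p := by omega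
    rw [e]
  omega

lemma walk_between (f : ℕ → ℕ) (hstep : ∀ i, f (i+1) ≤ f i + 1 ∧ f i ≤ f (i+1) + 1) :
    ∀ (j i m : ℕ), i ≤ j → ((f i ≤ m ∧ m ≤ f j) ∨ (f j ≤ m ∧ m ≤ f i)) →
      ∃ l, i ≤ l ∧ l ≤ j ∧ f l = m := by
  intro j
  induction j with
  | zero =>
    intro i m hij hc
    refine ⟨0, by omega, by omega, ?_⟩
    have : i = 0 := by omega
    subst this
    omega
  | succ j ih =>
    intro i m hij hc
    by_cases hi : i = j + 1
    · subst hi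
      exact ⟨j+1, le_refl _, le_refl _, by omega⟩
    · have hij' : i ≤ j := by omega
      have hs := hstep j
      rcases hc with ⟨h1, h2⟩ | ⟨h1, h2⟩
      · by_cases hmj : m ≤ f j
        · obtain ⟨l, hl1, hl2, hl3⟩ := ih i m hij' (Or.inl ⟨h1, hmj⟩)
          exact ⟨l, hl1, by omega, hl3⟩
        · exact ⟨j+1, by omega, le_refl _, by omega⟩
      · by_cases hmj : f j ≤ m
        · obtain ⟨l, hl1, hl2, hl3⟩ := ih i m hij' (Or.inr ⟨hmj, h2⟩)
          exact ⟨l, hl1, by omega, hl3⟩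
        · exact ⟨j+1, by omega, le_refl _, by omega⟩

lemma three_distinct_ncard {S : Set ℕ} (hfin : S.Finite) {x y z : ℕ}
    (hx : x ∈ S) (hy : y ∈ S) (hz : z ∈ S)
    (hxy : x ≠ y) (hxz : x ≠ z) (hyz : y ≠ z) : 3 ≤ S.ncard := by
  have hsub : ({x, y, z} : Set ℕ) ⊆ S := by
    intro w hw
    rcases hw with rfl | rfl | rfl
    · exact hx
    · exact hy
    · exact hz
  have h3 : ({x, y, z} : Set ℕ).ncard = 3 := by
    rw [Set.ncard_insert_of_notMem (by simp [hxy, hxz]) (Set.toFinite _), Set.ncard_pair hyz]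
  calc 3 = ({x, y, z} : Set ℕ).ncard := h3.symm
    _ ≤ S.ncard := Set.ncard_le_ncard hsub hfin

lemma tail_balance_of_two (ω : ℕ → A) (a : A) (L th : ℕ)
    (hcard : ((fun i => cval ω a i L) '' Set.Ici th).ncard ≤ 2) :
    ∀ i i', th ≤ i → th ≤ i' → cval ω a i L ≤ cval ω a i' L + 1 := by
  intro i i' hi hi'
  by_contra hcon
  push_neg at hcon
  have hstep : ∀ p : ℕ, cval ω a (p+1) L ≤ cval ω a p L + 1 ∧ cval ω a p L ≤ cval ω a (p+1) L + 1 := by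
    intro p
    have := cval_step ω a p L
    by_cases h1 : ω p = a <;> by_cases h2 : ω (p+L) = a <;> simp [h1, h2] at this <;> omega
  have hfin : ((fun i => cval ω a i L) '' Set.Ici th).Finite := by
    apply Set.Finite.subset (Set.finite_Icc 0 L)
    rintro _ ⟨i0, _, rfl⟩
    simp only [Set.mem_Icc]
    refine ⟨by omega, ?_⟩
    calc cval ω a i0 L ≤ ∑ p ∈ Finset.range L, 1 := by
          apply Finset.sum_le_sum
          intro p _
          by_cases h : ω (i0+p) = a <;> simp [h]
      _ = L := by simp
  -- find intermediate value
  have hw : ∀ (jj ii mm : ℕ), ii ≤ jj →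
      ((cval ω a ii L ≤ mm ∧ mm ≤ cval ω a jj L) ∨ (cval ω a jj L ≤ mm ∧ mm ≤ cval ω a ii L)) →
      ∃ l, ii ≤ l ∧ l ≤ jj ∧ cval ω a l L = mm :=
    fun jj ii mm => walk_between (fun p => cval ω a p L) hstep jj ii mm
  have hmid : ∃ l, th ≤ l ∧ cval ω a l L = cval ω a i' L + 1 := by
    rcases le_or_gt i i' with ho | ho
    · obtain ⟨l, hl1, hl2, hl3⟩ := hw i' i (cval ω a i' L + 1) ho (Or.inr ⟨by omega, by omega⟩)
      exact ⟨l, by omega, hl3⟩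
    · obtain ⟨l, hl1, hl2, hl3⟩ := hw i i' (cval ω a i' L + 1) (by omega) (Or.inl ⟨by omega, by omega⟩)
      exact ⟨l, by omega, hl3⟩
  obtain ⟨l, hl, hlv⟩ := hmid
  have m1 : cval ω a i' L ∈ (fun i0 => cval ω a i0 L) '' Set.Ici th := ⟨i', hi', rfl⟩
  have m2 : cval ω a l L ∈ (fun i0 => cval ω a i0 L) '' Set.Ici th := ⟨l, hl, rfl⟩
  have m3 : cval ω a i L ∈ (fun i0 => cval ω a i0 L) '' Set.Ici th := ⟨i, hi, rfl⟩
  have h3 := three_distinct_ncard hfin m1 m2 m3 (by omega) (by omega) (by omega)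
  omega

lemma cval_nonconst (ω : ℕ → A) (a b : A) (hab : a ≠ b) (hall : ∀ i, ω i = a ∨ ω i = b)
    (hap : ¬ UltimatelyPeriodic ω) (th L : ℕ) (hL : 1 ≤ L) :
    ∃ i i', th ≤ i ∧ th ≤ i' ∧ cval ω a i L ≠ cval ω a i' L := by
  by_contra h
  push_neg at h
  apply hap
  refine ⟨L, hL, th, ?_⟩
  intro i hi
  have h1 := h (i+1) i (by omega) (by omega)
  have h2 := cval_step ω a i L
  rw [h1] at h2
  rcases hall i with hia | hib <;> rcases hall (i+L) with hLa | hLb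
  · rw [hia, hLa]
  · exfalso
    simp only [hia, hLb] at h2
    simp [Ne.symm hab] at h2
  · exfalso
    simp only [hib, hLa] at h2
    simp [Ne.symm hab] at h2
  · rw [hib, hLb]

lemma win_eq_ofFn (ω : ℕ → A) (i k : ℕ) : win ω i k = List.ofFn (fun q : Fin k => ω (i + q)) := by
  apply List.ext_getElem (by simp [win_length])
  intro q h1 h2
  rw [List.getElem_ofFn]
  rw [win_getElem ω i k q (by simpa [win_length] using h1)]

lemma phi_cval (ω : ℕ → A) (a : A) (k n : ℕ) (hk : 1 ≤ k) (hkn : k ≤ n) (i i' : ℕ)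
    (h : Phi k (win ω i n) = Phi k (win ω i' n)) :
    cval ω a i (n - k + 1) = cval ω a i' (n - k + 1) := by
  classical
  set LS : Finset (List A) :=
    ((Finset.univ : Finset (Fin k → A)).image (fun g => List.ofFn g)).filter
      (fun z => z.take 1 = [a]) with hLS
  have hlen : ∀ z ∈ LS, z.length = k := by
    intro z hz
    rw [hLS] at hz
    simp only [Finset.mem_filter, Finset.mem_image] at hz
    obtain ⟨⟨g, _, rfl⟩, _⟩ := hz
    simp
  have hta : ∀ z ∈ LS, z.take 1 = [a] := by
    intro z hz
    rw [hLS] at hz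
    simp only [Finset.mem_filter] at hz
    exact hz.2
  have key : ∀ i0 : ℕ, cval ω a i0 (n - k + 1) = ∑ z ∈ LS, occ (win ω i0 n) z := by
    intro i0
    have hc : cval ω a i0 (n-k+1)
        = ((Finset.range (n-k+1)).filter (fun p => ω (i0+p) = a)).card := by
      rw [Finset.card_filter]
      rfl
    rw [hc]
    rw [Finset.card_eq_sum_card_fiberwise (f := fun p => win ω (i0+p) k) (t := LS) ?hmap]
    case hmap =>
      intro p hp
      simp only [Finset.coe_filter, Finset.mem_coe, Finset.mem_filter, Finset.mem_range, Set.mem_setOf_eq] at hp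
      rw [hLS]
      simp only [Finset.coe_filter, Finset.mem_coe, Finset.mem_filter, Finset.mem_image, Set.mem_setOf_eq]
      refine ⟨⟨fun q => ω (i0 + p + q), Finset.mem_univ _, (win_eq_ofFn ω (i0+p) k).symm⟩, ?_⟩
      rw [win_take ω (i0+p) k 1 hk, win_one, hp.2]
    apply Finset.sum_congr rfl
    intro z hz
    have hzl := hlen z hz
    rw [occ_eq_sum ω i0 n z (by omega), hzl]
    rw [Finset.filter_filter, Finset.card_filter]
    apply Finset.sum_congr rfl
    intro p _
    by_cases hwz : win ω (i0+p) k = z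
    · rw [if_pos ?_, if_pos hwz]
      refine ⟨?_, hwz⟩
      have ht : (win ω (i0+p) k).take 1 = [a] := by rw [hwz]; exact hta z hz
      rw [win_take ω (i0+p) k 1 hk, win_one] at ht
      injection ht
    · rw [if_neg ?_, if_neg hwz]
      intro hh
      exact hwz hh.2
  rw [key i, key i']
  apply Finset.sum_congr rfl
  intro z hz
  have hzl := hlen z hz
  apply phi_occ h
  · intro he
    rw [he] at hzl
    simp at hzl
    omega
  · omega

lemma phi_inj_short (ω : ℕ → A) (k m : ℕ) (hm : 1 ≤ m) (hmk : m ≤ k) (i i' : ℕ)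
    (h : Phi k (win ω i m) = Phi k (win ω i' m)) : win ω i m = win ω i' m := by
  have h1 : occ (win ω i' m) (win ω i m) = 1 := by
    rw [← phi_occ h (win_ne_nil ω i m hm) (by rw [win_length]; exact hmk)]
    exact occ_self ω i m
  rw [occ_eq_sum ω i' m (win ω i m) (by rw [win_length])] at h1
  rw [win_length] at h1
  have e : m - m + 1 = 1 := by omega
  rw [e, Finset.sum_range_one] at h1
  simp only [Nat.add_zero] at h1
  by_cases hc : win ω i' m = win ω i m
  · exact hc.symm
  · rw [if_neg hc] at h1
    omega

lemma kabeq_iff_phi (k : ℕ) (u v : List A) : KAbEq k u v ↔ Phi k u = Phi k v := by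
  constructor
  · intro h
    funext x
    by_cases hx : x ≠ [] ∧ x.length ≤ k
    · rw [Phi, Phi]
      rw [if_pos hx, if_pos hx]
      exact h x hx.1 hx.2
    · rw [Phi, Phi]
      rw [if_neg hx, if_neg hx]
  · intro h x h0 h1
    exact phi_occ h h0 h1

lemma kab_eq_ncard (ω : ℕ → A) (k n : ℕ) : kabComplexity ω k n = (Cls ω k n 0).ncard := by
  classical
  have hresp : ∀ (u v : {u : List A // u.length = n ∧ IsFactorOf u ω}),
      KAbEq k u.1 v.1 → (fun u0 : {u : List A // u.length = n ∧ IsFactorOf u ω} => Phi k u0.1) u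
        = (fun u0 : {u : List A // u.length = n ∧ IsFactorOf u ω} => Phi k u0.1) v := by
    intro u v huv
    exact (kabeq_iff_phi k u.1 v.1).1 huv
  set f : Quotient (factorSetoid ω k n) → (List A → ℕ) :=
    Quotient.lift (fun u0 : {u : List A // u.length = n ∧ IsFactorOf u ω} => Phi k u0.1) hresp
    with hf
  have hinj : Function.Injective f := by
    intro q1 q2
    refine Quotient.inductionOn₂ q1 q2 ?_
    intro u v h
    apply Quotient.sound
    exact (kabeq_iff_phi k u.1 v.1).2 h
  have hwin : ∀ u : {u : List A // u.length = n ∧ IsFactorOf u ω}, ∃ i, u.1 = win ω i n := by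
    rintro ⟨u, hlen, i, hu⟩
    refine ⟨i, ?_⟩
    show u = win ω i n
    conv_lhs => rw [hu]
    rw [show u.length = n from hlen]
    rfl
  have hrange : Set.range f = Cls ω k n 0 := by
    ext y
    constructor
    · rintro ⟨q, rfl⟩
      refine Quotient.inductionOn q ?_
      intro u
      obtain ⟨i, hi⟩ := hwin u
      exact ⟨i, Set.mem_Ici.2 (Nat.zero_le i), (congrArg (Phi k) hi).symm⟩
    · rintro ⟨i, _, rfl⟩
      exact ⟨⟦⟨win ω i n, win_length ω i n, ⟨i, by rw [win_length]; rfl⟩⟩⟧, rfl⟩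
  calc kabComplexity ω k n = Nat.card (Quotient (factorSetoid ω k n)) := rfl
    _ = Nat.card (Set.range f) := Nat.card_congr (Equiv.ofInjective f hinj)
    _ = (Set.range f).ncard := (Nat.card_coe_set_eq _)
    _ = (Cls ω k n 0).ncard := by rw [hrange]

lemma letters (ω : ℕ → A) (k : ℕ) (hk : 1 ≤ k) (h2 : kabComplexity ω k 1 = 2) :
    ∃ a b : A, a ≠ b ∧ Set.range ω = {a, b} := by
  have hC : (Cls ω k 1 0).ncard = 2 := by rw [← kab_eq_ncard]; exact h2
  have hinj : Set.InjOn (Phi k) (Wset ω 1 0) := by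
    rintro _ ⟨i, _, rfl⟩ _ ⟨i', _, rfl⟩ hphi
    exact phi_inj_short ω k 1 (le_refl 1) hk i i' hphi
  have hW : (Wset ω 1 0).ncard = 2 := by
    rw [← Set.ncard_image_of_injOn hinj, ← Cls_eq_image]
    exact hC
  have hIci : (Set.Ici (0:ℕ)) = Set.univ := by ext x; simp
  have hW2 : Wset ω 1 0 = (fun c : A => [c]) '' Set.range ω := by
    rw [Wset, hIci, ← Set.image_univ, Set.image_image]
    apply Set.image_congr'
    intro i
    exact win_one ω i
  have hrng : (Set.range ω).ncard = 2 := by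
    have hi2 : Set.InjOn (fun c : A => [c]) (Set.range ω) := by
      intro x _ y _ hxy
      injection hxy
    rw [← Set.ncard_image_of_injOn hi2, ← hW2, hW]
  obtain ⟨a, b, hab, hset⟩ := Set.ncard_eq_two.1 hrng
  exact ⟨a, b, hab, hset⟩

end KSZ

theorem stmt15 {A : Type*} [Fintype A] [DecidableEq A] (ω : ℕ → A)
    (hap : ¬ UltimatelyPeriodic ω) (k : ℕ) (hk : 1 ≤ k)
    (hq : ∀ n : ℕ, 1 ≤ n → kabComplexity ω k n = if n < 2 * k then n + 1 else 2 * k) :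
    ∃ a b : A, a ≠ b ∧ (∀ i, ω i = a ∨ ω i = b) ∧
      ∀ u v : List A, IsFactorOf u ω → IsFactorOf v ω → u.length = v.length →
        ((u.count a : ℤ) - v.count a).natAbs ≤ 1 := by
  classical
  have h1 : kabComplexity ω k 1 = 2 := by
    rw [hq 1 (by omega), if_pos (by omega)]
  obtain ⟨a, b, hab, hset⟩ := KSZ.letters ω k hk h1
  have hall : ∀ i, ω i = a ∨ ω i = b := by
    intro i
    have hm : ω i ∈ Set.range ω := ⟨i, rfl⟩
    rw [hset] at hm
    rcases hm with h | h
    · exact Or.inl h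
    · exact Or.inr h
  refine ⟨a, b, hab, hall, ?_⟩
  have hb1 : ∀ (p L0 : ℕ), KSZ.cval ω a p L0 ≤ L0 := by
    intro p L0
    calc KSZ.cval ω a p L0 ≤ ∑ q ∈ Finset.range L0, 1 := by
          apply Finset.sum_le_sum
          intro q _
          by_cases hc : ω (p+q) = a <;> simp [hc]
      _ = L0 := by simp
  have main : ∀ (L i i' : ℕ), KSZ.cval ω a i L ≤ KSZ.cval ω a i' L + 1 := by
    intro L i i'
    by_cases hL1 : L ≤ 1
    · have := hb1 i L
      omega
    · have hL2 : 2 ≤ L := by omega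
      -- tail balance at length L beyond position k-1
      have TB : ∀ p p', k-1 ≤ p → k-1 ≤ p' →
          KSZ.cval ω a p L ≤ KSZ.cval ω a p' L + 1 := by
        set nA := L + 2*(k-1) with hnA
        have h2k : (KSZ.Cls ω k nA 0).ncard = 2*k := by
          rw [← KSZ.kab_eq_ncard, hq nA (by omega), if_neg (by omega)]
        have hch := KSZ.chain ω hap k nA 0 hk (by omega)
        have e1 : nA - 2*(k-1) = L := by omega
        have e2 : 0 + (k-1) = k-1 := by omega
        rw [e1, e2, h2k] at hch
        have hcls1 : (KSZ.Cls ω 1 L (k-1)).ncard ≤ 2 := by omega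
        have hconst : ∀ p ∈ Set.Ici (k-1), ∀ p' ∈ Set.Ici (k-1),
            KSZ.Phi 1 (KSZ.win ω p L) = KSZ.Phi 1 (KSZ.win ω p' L) →
            KSZ.cval ω a p L = KSZ.cval ω a p' L := by
          intro p _ p' _ hphi
          have h01 := KSZ.phi_occ hphi (KSZ.singleton_ne_nil a) (by simp)
          rw [KSZ.cval_occ ω a p L (by omega), KSZ.cval_occ ω a p' L (by omega)] at h01
          exact h01
        have hle := KSZ.ncard_image_le_image (fun i0 => KSZ.Phi 1 (KSZ.win ω i0 L))
            (fun i0 => KSZ.cval ω a i0 L) (Set.Ici (k-1)) ⟨k-1, Set.mem_Ici.2 (le_refl _)⟩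
            hconst (KSZ.Cls_finite ω 1 L (k-1))
        have himg : ((fun i0 => KSZ.cval ω a i0 L) '' Set.Ici (k-1)).ncard ≤ 2 :=
          le_trans hle hcls1
        exact KSZ.tail_balance_of_two ω a L (k-1) himg
      by_cases hLk : L ≤ k
      · -- short lengths: every factor occurs in the tail
        have hCl : (KSZ.Cls ω k L 0).ncard = L + 1 := by
          rw [← KSZ.kab_eq_ncard, hq L (by omega), if_pos (by omega)]
        have hinj : Set.InjOn (KSZ.Phi k) (KSZ.Wset ω L 0) := by
          rintro _ ⟨p, _, rfl⟩ _ ⟨p', _, rfl⟩ hphi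
          exact KSZ.phi_inj_short ω k L (by omega) hLk p p' hphi
        have hWL : (KSZ.Wset ω L 0).ncard = L + 1 := by
          rw [← Set.ncard_image_of_injOn hinj, ← KSZ.Cls_eq_image]
          exact hCl
        have hgrow := KSZ.MH_growth ω hap (k-1) L
        have hsub : KSZ.Wset ω L (k-1) ⊆ KSZ.Wset ω L 0 := KSZ.Wset_subset ω L (by omega)
        have heqW : KSZ.Wset ω L (k-1) = KSZ.Wset ω L 0 :=
          Set.eq_of_subset_of_ncard_le hsub (by omega) (KSZ.Wset_finite ω L 0)
        have hmem : KSZ.win ω i L ∈ KSZ.Wset ω L 0 := ⟨i, Set.mem_Ici.2 (Nat.zero_le i), rfl⟩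
        rw [← heqW] at hmem
        obtain ⟨p, hp, hpe0⟩ := hmem
        have hpe : KSZ.win ω p L = KSZ.win ω i L := hpe0
        have hmem' : KSZ.win ω i' L ∈ KSZ.Wset ω L 0 := ⟨i', Set.mem_Ici.2 (Nat.zero_le i'), rfl⟩
        rw [← heqW] at hmem'
        obtain ⟨p', hp', hpe0'⟩ := hmem'
        have hpe' : KSZ.win ω p' L = KSZ.win ω i' L := hpe0'
        have hcv : KSZ.cval ω a p L = KSZ.cval ω a i L := by
          rw [← KSZ.count_win ω a p L, ← KSZ.count_win ω a i L, hpe]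
        have hcv' : KSZ.cval ω a p' L = KSZ.cval ω a i' L := by
          rw [← KSZ.count_win ω a p' L, ← KSZ.count_win ω a i' L, hpe']
        have := TB p p' (Set.mem_Ici.1 hp) (Set.mem_Ici.1 hp')
        omega
      · -- long lengths: use the k-counts functional
        have hLk1 : k + 1 ≤ L := by omega
        set nC := L + (k-1) with hnC
        have h2k : (KSZ.Cls ω k nC 0).ncard = 2*k := by
          rw [← KSZ.kab_eq_ncard, hq nC (by omega), if_neg (by omega)]
        have hch := KSZ.chain ω hap k nC (k-1) hk (by omega)
        have e1 : nC - 2*(k-1) = L - (k-1) := by omega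
        rw [e1] at hch
        obtain ⟨q, q', hq1, hq2, hqe⟩ :=
          KSZ.cval_nonconst ω a b hab hall hap (k-1 + (k-1)) (L-(k-1)) (by omega)
        have hbot : 2 ≤ (KSZ.Cls ω 1 (L-(k-1)) (k-1 + (k-1))).ncard := by
          have hne : KSZ.Phi 1 (KSZ.win ω q (L-(k-1))) ≠ KSZ.Phi 1 (KSZ.win ω q' (L-(k-1))) := by
            intro hh
            apply hqe
            have h01 := KSZ.phi_occ hh (KSZ.singleton_ne_nil a) (by simp)
            rw [KSZ.cval_occ ω a q _ (by omega), KSZ.cval_occ ω a q' _ (by omega)] at h01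
            exact h01
          have hm1 : KSZ.Phi 1 (KSZ.win ω q (L-(k-1)))
              ∈ KSZ.Cls ω 1 (L-(k-1)) (k-1 + (k-1)) := ⟨q, hq1, rfl⟩
          have hm2 : KSZ.Phi 1 (KSZ.win ω q' (L-(k-1)))
              ∈ KSZ.Cls ω 1 (L-(k-1)) (k-1 + (k-1)) := ⟨q', hq2, rfl⟩
          have hsub2 : ({KSZ.Phi 1 (KSZ.win ω q (L-(k-1))), KSZ.Phi 1 (KSZ.win ω q' (L-(k-1)))} :
              Set (List A → ℕ)) ⊆ KSZ.Cls ω 1 (L-(k-1)) (k-1 + (k-1)) := by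
            intro x hx
            rcases hx with rfl | rfl
            · exact hm1
            · exact hm2
          have := Set.ncard_le_ncard hsub2 (KSZ.Cls_finite ω 1 (L-(k-1)) (k-1 + (k-1)))
          rw [Set.ncard_pair hne] at this
          exact this
        have htail : 2*k ≤ (KSZ.Cls ω k nC (k-1)).ncard := by omega
        have hsubC : KSZ.Cls ω k nC (k-1) ⊆ KSZ.Cls ω k nC 0 := KSZ.Cls_subset ω k nC (by omega)
        have heqC : KSZ.Cls ω k nC (k-1) = KSZ.Cls ω k nC 0 :=
          Set.eq_of_subset_of_ncard_le hsubC (by omega) (KSZ.Cls_finite ω k nC 0)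
        have hmem : KSZ.Phi k (KSZ.win ω i nC) ∈ KSZ.Cls ω k nC 0 :=
          ⟨i, Set.mem_Ici.2 (Nat.zero_le i), rfl⟩
        rw [← heqC] at hmem
        obtain ⟨p, hp, hpe0⟩ := hmem
        have hpe : KSZ.Phi k (KSZ.win ω p nC) = KSZ.Phi k (KSZ.win ω i nC) := hpe0
        have hmem' : KSZ.Phi k (KSZ.win ω i' nC) ∈ KSZ.Cls ω k nC 0 :=
          ⟨i', Set.mem_Ici.2 (Nat.zero_le i'), rfl⟩
        rw [← heqC] at hmem'
        obtain ⟨p', hp', hpe0'⟩ := hmem'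
        have hpe' : KSZ.Phi k (KSZ.win ω p' nC) = KSZ.Phi k (KSZ.win ω i' nC) := hpe0'
        have hcv := KSZ.phi_cval ω a k nC hk (by omega) p i hpe
        have hcv' := KSZ.phi_cval ω a k nC hk (by omega) p' i' hpe'
        have eL : nC - k + 1 = L := by omega
        rw [eL] at hcv hcv'
        have := TB p p' (Set.mem_Ici.1 hp) (Set.mem_Ici.1 hp')
        omega
  intro u v hu hv hlen
  obtain ⟨iu, hu'⟩ := hu
  obtain ⟨iv, hv'⟩ := hv
  have hu2 : u = KSZ.win ω iu u.length := hu'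
  have hv2 : v = KSZ.win ω iv v.length := hv'
  have c1 : u.count a = KSZ.cval ω a iu u.length := by
    conv_lhs => rw [hu2]
    rw [KSZ.count_win]
  have c2 : v.count a = KSZ.cval ω a iv u.length := by
    conv_lhs => rw [hv2]
    rw [KSZ.count_win, ← hlen]
  have e1 := main u.length iu iv
  have e2 := main u.length iv iu
  omega
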